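/- Let N ≥ 1, a ∈ (0,1), w ≥ 0. On a probability space let (W_n)_{n≥1}, (T_n)_{n≥1}, (S_n)_{n≥1}, (A_n)_{n≥2} be nonnegative random variables and (Y_n)_{n≥1} random variables in Fin N with, almost surely, W_1 = w, T_1 = 0, W_{n+1} = max(a W_n + S_n − A_{n+1}, 0) and T_{n+1} = T_n + A_{n+1} for all n ≥ 1. Let μ_i be probability measures on [0,∞) with β_i(z) := ∫ e^{-z x} dμ_i(x), and let χ_{i j} : ℂ → ℂ and ψ_i : ℂ → ℂ be functions with Re ψ_i(z) ≥ 0 whenever Re z ≥ 0. Assume: for every n ≥ 1, all i, j, all bounded measurable φ : ℝ × ℝ → ℂ and ξ : ℝ → ℂ, and every z ∈ ℂ with Re z ≥ 0, E[φ(W_n, T_n) ξ(S_n) e^{-z A_{n+1}} 1_{Y_n=i} 1_{Y_{n+1}=j}] = E[φ(W_n, T_n) 1_{Y_n=i}] · χ_{i j}(z) · ∫ ξ(t) e^{-ψ_i(z) t} dμ_i(t). Set p_j := P(Y_1 = j). Then for all r, s, η ∈ ℂ with |r| < 1, Re s = 0, Re η ≥ 0, the series Z_j(r,s,η) := Σ_{n≥1}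 r^n E[e^{-s W_n − η T_n} 1_{Y_n=j}] and V_j(r,s,η) := Σ_{n≥1} r^{n+1} E[(1 − e^{-s·min(a W_n + S_n − A_{n+1}, 0)}) e^{-η T_{n+1}} 1_{Y_{n+1}=j}] converge absolutely and, for every j: Z_j(r,s,η) − r p_j e^{-s w} = r Σ_i Z_i(r, a s, η) β_i(s + ψ_i(η − s)) χ_{i j}(η − s) + V_j(r,s,η). -/

import Mathlib

open MeasureTheory Set

lemma aux_norm_exp_le_one {z : ℂ} (hz : z.re ≤ 0) : ‖Complex.exp z‖ ≤ 1 := by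
  rw [Complex.norm_exp]; exact Real.exp_le_one_iff.mpr hz

lemma aux_norm_ind {N : ℕ} (y j : Fin N) : ‖(if y = j then (1:ℂ) else 0)‖ ≤ 1 := by
  split <;> simp

lemma aux_integrable {Ω : Type*} [MeasureSpace Ω] [IsProbabilityMeasure (volume : Measure Ω)]
    {f : Ω → ℂ} (hf : Measurable f) (C : ℝ) (h : ∀ ω, ‖f ω‖ ≤ C) : Integrable f :=
  (integrable_const C).mono' hf.aestronglyMeasurable (Filter.Eventually.of_forall h)

lemma aux_norm_integral {Ω : Type*} [MeasureSpace Ω] [IsProbabilityMeasure (volume : Measure Ω)]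
    {f : Ω → ℂ} {C : ℝ} (h : ∀ ω, ‖f ω‖ ≤ C) : ‖∫ ω, f ω‖ ≤ C := by
  calc ‖∫ ω, f ω‖ ≤ C * (volume (univ : Set Ω)).toReal :=
        norm_integral_le_of_norm_le_const (Filter.Eventually.of_forall h)
    _ = C := by simp

lemma aux_exp_max (s : ℂ) (X : ℝ) :
    Complex.exp (-s * ((max X 0 : ℝ) : ℂ)) =
      Complex.exp (-s * X) + (1 - Complex.exp (-s * ((min X 0 : ℝ) : ℂ))) := by
  rcases le_total 0 X with h | h
  · rw [max_eq_left h, min_eq_right h]; simp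
  · rw [max_eq_right h, min_eq_left h]; simp

lemma aux_sum_ind {N : ℕ} (C D : ℂ) (y : Fin N) :
    ∑ i : Fin N, C * (if y = i then (1:ℂ) else 0) * D = C * D := by
  rw [Finset.sum_eq_single y]
  · simp
  · intro b _ hb; simp [Ne.symm hb]
  · intro h; exact absurd (Finset.mem_univ y) h

noncomputable def ZserTerm {Ω : Type*} [MeasureSpace Ω] {N : ℕ}
    (W T : ℕ → Ω → ℝ) (Y : ℕ → Ω → Fin N) (j : Fin N) (r s η : ℂ) (n : ℕ) : ℂ :=
  r ^ (n + 1) * ∫ ω, Complex.exp (-s * W (n + 1) ω - η * T (n + 1) ω) *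
    (if Y (n + 1) ω = j then (1 : ℂ) else 0)

noncomputable def VserTerm {Ω : Type*} [MeasureSpace Ω] {N : ℕ}
    (W S A T : ℕ → Ω → ℝ) (Y : ℕ → Ω → Fin N) (a : ℝ) (j : Fin N)
    (r s η : ℂ) (n : ℕ) : ℂ :=
  r ^ (n + 2) * ∫ ω,
    (1 - Complex.exp (-s * (min (a * W (n + 1) ω + S (n + 1) ω - A (n + 2) ω) 0 : ℝ))) *
      Complex.exp (-η * T (n + 2) ω) * (if Y (n + 2) ω = j then (1 : ℂ) else 0)

/-- Theorem 5.3 (equation (5.13)) of the paper: the transient Wiener–Hopf-type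
equations for the Markov-modulated reflected autoregressive process in which
each interarrival time depends on the previous service time through
`E[e^{-s A_{n+1}} 1_{Y_{n+1}=j} | S_n = t, Y_n = i] = χ_{i j}(s) e^{-ψ_i(s) t}`. -/
theorem stmt_12 (N : ℕ) (hN : 1 ≤ N) (a : ℝ) (ha : a ∈ Set.Ioo (0:ℝ) 1)
    (w : ℝ) (hw : 0 ≤ w)
    (Ω : Type*) [MeasureSpace Ω] [IsProbabilityMeasure (volume : Measure Ω)]
    (W T S A : ℕ → Ω → ℝ) (Y : ℕ → Ω → Fin N)
    (hWmeas : ∀ n, Measurable (W n)) (hTmeas : ∀ n, Measurable (T n))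
    (hSmeas : ∀ n, Measurable (S n)) (hAmeas : ∀ n, Measurable (A n))
    (hYmeas : ∀ n, Measurable (Y n))
    (hWpos : ∀ n, 1 ≤ n → ∀ ω, 0 ≤ W n ω) (hTpos : ∀ n, 1 ≤ n → ∀ ω, 0 ≤ T n ω)
    (hSpos : ∀ n, 1 ≤ n → ∀ ω, 0 ≤ S n ω) (hApos : ∀ n, 2 ≤ n → ∀ ω, 0 ≤ A n ω)
    (hrec : ∀ᵐ ω, W 1 ω = w ∧ T 1 ω = 0 ∧ ∀ n, 1 ≤ n →
      W (n + 1) ω = max (a * W n ω + S n ω - A (n + 1) ω) 0 ∧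
      T (n + 1) ω = T n ω + A (n + 1) ω)
    (μ : Fin N → Measure ℝ) (hμprob : ∀ i, IsProbabilityMeasure (μ i))
    (hμsupp : ∀ i, μ i (Set.Iio 0) = 0)
    (β : Fin N → ℂ → ℂ) (hβ : ∀ i z, β i z = ∫ x, Complex.exp (-z * x) ∂(μ i))
    (χ : Fin N → Fin N → ℂ → ℂ) (ψ : Fin N → ℂ → ℂ)
    (hψ : ∀ i z, 0 ≤ z.re → 0 ≤ (ψ i z).re)
    (hfact : ∀ n : ℕ, 1 ≤ n → ∀ (i j : Fin N) (φ : ℝ × ℝ → ℂ) (ξ : ℝ → ℂ),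
      Measurable φ → (∃ C, ∀ x, ‖φ x‖ ≤ C) →
      Measurable ξ → (∃ C, ∀ t, ‖ξ t‖ ≤ C) →
      ∀ z : ℂ, 0 ≤ z.re →
      (∫ ω, φ (W n ω, T n ω) * ξ (S n ω) * Complex.exp (-z * A (n + 1) ω) *
          (if Y n ω = i then (1 : ℂ) else 0) * (if Y (n + 1) ω = j then (1 : ℂ) else 0))
        = (∫ ω, φ (W n ω, T n ω) * (if Y n ω = i then (1 : ℂ) else 0)) *
            χ i j z * ∫ t, ξ t * Complex.exp (-(ψ i z) * t) ∂(μ i))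
    (r s η : ℂ) (hr : ‖r‖ < 1) (hs : s.re = 0) (hη : 0 ≤ η.re) :
    (∀ j, Summable fun n => ‖ZserTerm W T Y j r s η n‖) ∧
    (∀ j, Summable fun n => ‖ZserTerm W T Y j r ((a : ℂ) * s) η n‖) ∧
    (∀ j, Summable fun n => ‖VserTerm W S A T Y a j r s η n‖) ∧
    (∀ j : Fin N,
      (∑' n, ZserTerm W T Y j r s η n) -
          r * ((volume {ω | Y 1 ω = j}).toReal : ℂ) * Complex.exp (-s * w)
        = r * (∑ i, (∑' n, ZserTerm W T Y i r ((a : ℂ) * s) η n) *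
              β i (s + ψ i (η - s)) * χ i j (η - s))
          + ∑' n, VserTerm W S A T Y a j r s η n) := by
  have hr' : ‖r‖ < 1 := hr
  have has : ((a:ℂ) * s).re = 0 := by simp [Complex.mul_re, hs]
  have hind : ∀ (m : ℕ) (j : Fin N), Measurable fun ω => (if Y m ω = j then (1:ℂ) else 0) :=
    fun m j => Measurable.ite ((hYmeas m) (measurableSet_singleton j))
      measurable_const measurable_const
  -- norm bound on exponentials
  have hexp1 : ∀ s' : ℂ, s'.re = 0 → ∀ (x t : ℝ), 0 ≤ t →
      ‖Complex.exp (-s' * x - η * t)‖ ≤ 1 := by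
    intro s' hs' x t ht
    apply aux_norm_exp_le_one
    simp only [Complex.sub_re, Complex.neg_re, Complex.mul_re, Complex.ofReal_re,
      Complex.ofReal_im, hs', mul_zero, zero_mul, sub_zero, zero_sub, neg_zero]
    nlinarith [mul_nonneg hη ht]
  have hexps : ∀ s' : ℂ, s'.re = 0 → ∀ x : ℝ, ‖Complex.exp (-s' * x)‖ = 1 := by
    intro s' hs' x
    rw [Complex.norm_exp]
    simp [Complex.mul_re, hs']
  -- bound on Z terms
  have hZb : ∀ (s' : ℂ), s'.re = 0 → ∀ (j : Fin N) (n : ℕ),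
      ‖ZserTerm W T Y j r s' η n‖ ≤ ‖r‖ ^ (n+1) := by
    intro s' hs' j n
    unfold ZserTerm
    rw [norm_mul, norm_pow]
    have h2 : ‖∫ ω, Complex.exp (-s' * W (n+1) ω - η * T (n+1) ω) *
        (if Y (n+1) ω = j then (1:ℂ) else 0)‖ ≤ 1 := by
      apply aux_norm_integral
      intro ω
      rw [norm_mul]
      calc ‖Complex.exp (-s' * W (n+1) ω - η * T (n+1) ω)‖ *
            ‖(if Y (n+1) ω = j then (1:ℂ) else 0)‖ ≤ 1 * 1 :=
            mul_le_mul (hexp1 s' hs' _ _ (hTpos (n+1) (by omega) ω)) (aux_norm_ind _ _)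
              (norm_nonneg _) zero_le_one
        _ = 1 := by ring
    calc ‖r‖ ^ (n+1) * ‖_‖ ≤ ‖r‖ ^ (n+1) * 1 := by gcongr
      _ = ‖r‖ ^ (n+1) := by ring
  have hVb : ∀ (j : Fin N) (n : ℕ),
      ‖VserTerm W S A T Y a j r s η n‖ ≤ 2 * ‖r‖ ^ (n+2) := by
    intro j n
    unfold VserTerm
    rw [norm_mul, norm_pow]
    have h2 : ‖∫ ω, (1 - Complex.exp (-s * (min (a * W (n + 1) ω + S (n + 1) ω - A (n + 2) ω) 0 : ℝ))) *
        Complex.exp (-η * T (n + 2) ω) * (if Y (n + 2) ω = j then (1:ℂ) else 0)‖ ≤ 2 := by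
      apply aux_norm_integral
      intro ω
      rw [norm_mul, norm_mul]
      have b1 : ‖(1 - Complex.exp (-s * (min (a * W (n + 1) ω + S (n + 1) ω - A (n + 2) ω) 0 : ℝ)))‖ ≤ 2 := by
        
        calc ‖(1:ℂ) - Complex.exp (-s * (min (a * W (n + 1) ω + S (n + 1) ω - A (n + 2) ω) 0 : ℝ))‖
            ≤ ‖(1:ℂ)‖ + ‖Complex.exp (-s * (min (a * W (n + 1) ω + S (n + 1) ω - A (n + 2) ω) 0 : ℝ))‖ :=
              norm_sub_le _ _
          _ = 2 := by rw [hexps s hs]; norm_num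
      have b2 : ‖Complex.exp (-η * T (n + 2) ω)‖ ≤ 1 := by
        apply aux_norm_exp_le_one
        simp only [Complex.neg_re, Complex.mul_re, Complex.ofReal_re, Complex.ofReal_im,
          mul_zero, sub_zero]
        nlinarith [mul_nonneg hη (hTpos (n+2) (by omega) ω)]
      calc _ ≤ 2 * 1 * 1 :=
            mul_le_mul (mul_le_mul b1 b2 (norm_nonneg _) (by norm_num))
              (aux_norm_ind _ _) (norm_nonneg _) (by norm_num)
        _ = 2 := by ring
    calc ‖r‖ ^ (n+2) * ‖_‖ ≤ ‖r‖ ^ (n+2) * 2 := by gcongr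
      _ = 2 * ‖r‖ ^ (n+2) := by ring
  -- summability
  have hgeo : Summable fun n : ℕ => ‖r‖ ^ (n+1) := by
    simpa [pow_succ] using (summable_geometric_of_lt_one (norm_nonneg r) hr').mul_right ‖r‖
  have hgeo2 : Summable fun n : ℕ => 2 * ‖r‖ ^ (n+2) := by
    have := ((summable_geometric_of_lt_one (norm_nonneg r) hr').mul_right (‖r‖^2)).mul_left 2
    simpa [pow_add, mul_comm, mul_assoc] using this
  have hZsum : ∀ (s' : ℂ), s'.re = 0 → ∀ j, Summable fun n => ‖ZserTerm W T Y j r s' η n‖ :=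
    fun s' hs' j => Summable.of_nonneg_of_le (fun n => norm_nonneg _) (hZb s' hs' j) hgeo
  have hVsum : ∀ j, Summable fun n => ‖VserTerm W S A T Y a j r s η n‖ :=
    fun j => Summable.of_nonneg_of_le (fun n => norm_nonneg _) (hVb j) hgeo2

  refine ⟨hZsum s hs, hZsum _ has, hVsum, ?_⟩
  intro j
  have hre_ηs : 0 ≤ (η - s).re := by simpa [Complex.sub_re, hs] using hη
  have hb4 : ∀ (x y z u : ℂ), ‖x‖ ≤ 1 → ‖y‖ ≤ 1 → ‖z‖ ≤ 1 → ‖u‖ ≤ 1 → ‖x*y*z*u‖ ≤ 1 := by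
    intro x y z u hx hy hz hu
    rw [norm_mul, norm_mul, norm_mul]
    exact mul_le_one₀ (mul_le_one₀ (mul_le_one₀ hx (norm_nonneg y) hy) (norm_nonneg z) hz)
      (norm_nonneg u) hu
  have hexpA : ∀ t : ℝ, 0 ≤ t → ‖Complex.exp (-(η - s) * t)‖ ≤ 1 := by
    intro t ht
    apply aux_norm_exp_le_one
    simp only [Complex.neg_re, Complex.mul_re, Complex.sub_re, Complex.ofReal_re,
      Complex.ofReal_im, hs, mul_zero, sub_zero]
    nlinarith [mul_nonneg hη ht]
  have hexpT : ∀ t : ℝ, 0 ≤ t → ‖Complex.exp (-η * t)‖ ≤ 1 := by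
    intro t ht
    apply aux_norm_exp_le_one
    simp only [Complex.neg_re, Complex.mul_re, Complex.ofReal_re, Complex.ofReal_im,
      mul_zero, sub_zero]
    nlinarith [mul_nonneg hη ht]
  set φ : ℝ × ℝ → ℂ := fun p => Complex.exp (-((a:ℂ) * s) * p.1 - η * ((max p.2 0 : ℝ) : ℂ))
    with hφdef
  set ξ : ℝ → ℂ := fun t => Complex.exp (-s * t) with hξdef
  have hφm : Measurable φ := by
    apply Continuous.measurable
    exact Complex.continuous_exp.comp
      (((continuous_const.mul (Complex.continuous_ofReal.comp continuous_fst))).sub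
        (continuous_const.mul (Complex.continuous_ofReal.comp (continuous_snd.max continuous_const))))
  have hφb : ∀ p : ℝ × ℝ, ‖φ p‖ ≤ 1 := fun p => hexp1 _ has p.1 (max p.2 0) (le_max_right _ _)
  have hξm : Measurable ξ :=
    Continuous.measurable (Complex.continuous_exp.comp (continuous_const.mul Complex.continuous_ofReal))
  have hξb : ∀ t, ‖ξ t‖ ≤ 1 := fun t => le_of_eq (hexps s hs t)
  have hβint : ∀ i, (∫ t, ξ t * Complex.exp (-(ψ i (η - s)) * t) ∂(μ i)) = β i (s + ψ i (η - s)) := by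
    intro i
    rw [hβ]
    apply integral_congr_ae
    apply Filter.Eventually.of_forall
    intro t
    simp only [hξdef]
    rw [← Complex.exp_add]
    congr 1
    ring
  -- the key one-step identity
  have key : ∀ n : ℕ, ZserTerm W T Y j r s η (n+1) =
      r * ∑ i, ZserTerm W T Y i r ((a:ℂ)*s) η n * β i (s + ψ i (η-s)) * χ i j (η-s)
      + VserTerm W S A T Y a j r s η n := by
    intro n
    have hAnn : 0 ≤ (2:ℕ) + n := by omega
    -- measurability pieces
    have mφWT : Measurable fun ω => φ (W (n+1) ω, T (n+1) ω) :=
      hφm.comp ((hWmeas (n+1)).prodMk (hTmeas (n+1)))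
    have mξS : Measurable fun ω => ξ (S (n+1) ω) := hξm.comp (hSmeas (n+1))
    have meA : Measurable fun ω => Complex.exp (-(η - s) * (A (n+2) ω : ℝ)) :=
      Complex.measurable_exp.comp ((Complex.measurable_ofReal.comp (hAmeas (n+2))).const_mul (-(η - s)))
    have mmin : Measurable fun ω => min (a * W (n+1) ω + S (n+1) ω - A (n+2) ω) 0 :=
      ((((hWmeas (n+1)).const_mul a).add (hSmeas (n+1))).sub (hAmeas (n+2))).min measurable_const
    have m1 : Measurable fun ω =>
        (1:ℂ) - Complex.exp (-s * ((min (a * W (n+1) ω + S (n+1) ω - A (n+2) ω) 0 : ℝ) : ℂ)) :=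
      measurable_const.sub
        (Complex.measurable_exp.comp ((Complex.measurable_ofReal.comp mmin).const_mul (-s)))
    have mT2 : Measurable fun ω => Complex.exp (-η * (T (n+2) ω : ℝ)) :=
      Complex.measurable_exp.comp ((Complex.measurable_ofReal.comp (hTmeas (n+2))).const_mul (-η))
    -- integrability of F and G
    have hFint : Integrable fun ω => φ (W (n+1) ω, T (n+1) ω) * ξ (S (n+1) ω) *
        Complex.exp (-(η - s) * (A (n+2) ω : ℝ)) * (if Y (n+2) ω = j then (1:ℂ) else 0) := by
      apply aux_integrable (((mφWT.mul mξS).mul meA).mul (hind (n+2) j)) 1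
      intro ω
      exact hb4 _ _ _ _ (hφb _) (hξb _) (hexpA _ (hApos (n+2) (by omega) ω)) (aux_norm_ind _ _)
    have hGint : Integrable fun ω =>
        (1 - Complex.exp (-s * ((min (a * W (n+1) ω + S (n+1) ω - A (n+2) ω) 0 : ℝ) : ℂ))) *
          Complex.exp (-η * (T (n+2) ω : ℝ)) * (if Y (n+2) ω = j then (1:ℂ) else 0) := by
      apply aux_integrable ((m1.mul mT2).mul (hind (n+2) j)) 2
      intro ω
      simp only [Pi.mul_apply]
      rw [norm_mul, norm_mul]
      have b1 : ‖(1:ℂ) - Complex.exp (-s * ((min (a * W (n+1) ω + S (n+1) ω - A (n+2) ω) 0 : ℝ) : ℂ))‖ ≤ 2 := by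
        calc ‖(1:ℂ) - Complex.exp (-s * ((min (a * W (n+1) ω + S (n+1) ω - A (n+2) ω) 0 : ℝ) : ℂ))‖
            ≤ ‖(1:ℂ)‖ + ‖Complex.exp (-s * ((min (a * W (n+1) ω + S (n+1) ω - A (n+2) ω) 0 : ℝ) : ℂ))‖ :=
              norm_sub_le _ _
          _ = 2 := by rw [hexps s hs]; norm_num
      calc _ ≤ 2 * 1 * 1 :=
            mul_le_mul (mul_le_mul b1 (hexpT _ (hTpos (n+2) (by omega) ω)) (norm_nonneg _) (by norm_num))
              (aux_norm_ind _ _) (norm_nonneg _) (by norm_num)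
        _ = 2 := by ring
    -- Step A: decompose E = F + G a.e.
    have hEFG : (∫ ω, Complex.exp (-s * (W (n+2) ω : ℝ) - η * (T (n+2) ω : ℝ)) *
          (if Y (n+2) ω = j then (1:ℂ) else 0))
        = (∫ ω, φ (W (n+1) ω, T (n+1) ω) * ξ (S (n+1) ω) *
            Complex.exp (-(η - s) * (A (n+2) ω : ℝ)) * (if Y (n+2) ω = j then (1:ℂ) else 0))
          + (∫ ω, (1 - Complex.exp (-s * ((min (a * W (n+1) ω + S (n+1) ω - A (n+2) ω) 0 : ℝ) : ℂ))) *
              Complex.exp (-η * (T (n+2) ω : ℝ)) * (if Y (n+2) ω = j then (1:ℂ) else 0)) := by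
      rw [← integral_add hFint hGint]
      apply integral_congr_ae
      filter_upwards [hrec] with ω hω
      obtain ⟨h2a, h2b⟩ : W (n+2) ω = max (a * W (n+1) ω + S (n+1) ω - A (n+2) ω) 0 ∧
          T (n+2) ω = T (n+1) ω + A (n+2) ω := hω.2.2 (n+1) (by omega)
      rw [h2a, h2b]
      simp only [hφdef, hξdef]
      rw [max_eq_left (hTpos (n+1) (by omega) ω)]
      have e1 : Complex.exp (-s * ((max (a * W (n+1) ω + S (n+1) ω - A (n+2) ω) 0 : ℝ) : ℂ)
            - η * ((T (n+1) ω + A (n+2) ω : ℝ) : ℂ))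
          = Complex.exp (-s * ((max (a * W (n+1) ω + S (n+1) ω - A (n+2) ω) 0 : ℝ) : ℂ)) *
            Complex.exp (-η * ((T (n+1) ω + A (n+2) ω : ℝ) : ℂ)) := by
        rw [← Complex.exp_add]; congr 1; ring
      rw [e1, aux_exp_max s (a * W (n+1) ω + S (n+1) ω - A (n+2) ω)]
      have e2 : Complex.exp (-s * ((a * W (n+1) ω + S (n+1) ω - A (n+2) ω : ℝ) : ℂ)) *
            Complex.exp (-η * ((T (n+1) ω + A (n+2) ω : ℝ) : ℂ))
          = Complex.exp (-((a:ℂ) * s) * (W (n+1) ω : ℝ) - η * (T (n+1) ω : ℝ)) *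
            Complex.exp (-s * (S (n+1) ω : ℝ)) * Complex.exp (-(η - s) * (A (n+2) ω : ℝ)) := by
        rw [← Complex.exp_add, ← Complex.exp_add, ← Complex.exp_add]
        congr 1
        push_cast
        ring
      linear_combination (if Y (n+2) ω = j then (1:ℂ) else 0) * e2
    -- Step B: split F by the value of Y (n+1)
    have hFsplit : (∫ ω, φ (W (n+1) ω, T (n+1) ω) * ξ (S (n+1) ω) *
          Complex.exp (-(η - s) * (A (n+2) ω : ℝ)) * (if Y (n+2) ω = j then (1:ℂ) else 0))
        = ∑ i : Fin N, (∫ ω, φ (W (n+1) ω, T (n+1) ω) * ξ (S (n+1) ω) *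
            Complex.exp (-(η - s) * (A (n+2) ω : ℝ)) * (if Y (n+1) ω = i then (1:ℂ) else 0) *
            (if Y (n+2) ω = j then (1:ℂ) else 0)) := by
      rw [← integral_finset_sum]
      · apply integral_congr_ae
        apply Filter.Eventually.of_forall
        intro ω
        exact (aux_sum_ind _ _ _).symm
      · intro i _
        apply aux_integrable ((((mφWT.mul mξS).mul meA).mul (hind (n+1) i)).mul (hind (n+2) j)) 1
        intro ω
        simp only [Pi.mul_apply]
        rw [norm_mul]
        exact mul_le_one₀
          (hb4 _ _ _ _ (hφb _) (hξb _) (hexpA _ (hApos (n+2) (by omega) ω)) (aux_norm_ind _ _))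
          (norm_nonneg _) (aux_norm_ind _ _)
    -- Step C: the factorization hypothesis on each summand
    have hfi : ∀ i : Fin N, (∫ ω, φ (W (n+1) ω, T (n+1) ω) * ξ (S (n+1) ω) *
          Complex.exp (-(η - s) * (A (n+2) ω : ℝ)) * (if Y (n+1) ω = i then (1:ℂ) else 0) *
          (if Y (n+2) ω = j then (1:ℂ) else 0))
        = (∫ ω, φ (W (n+1) ω, T (n+1) ω) * (if Y (n+1) ω = i then (1:ℂ) else 0)) *
            χ i j (η - s) * ∫ t, ξ t * Complex.exp (-(ψ i (η - s)) * t) ∂(μ i) :=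
      fun i => hfact (n+1) (by omega) i j φ ξ hφm ⟨1, hφb⟩ hξm ⟨1, hξb⟩ (η - s) hre_ηs
    -- Step D: identify ∫ φ · 1 with the Z-term integral
    have hφZ : ∀ i : Fin N, (∫ ω, φ (W (n+1) ω, T (n+1) ω) * (if Y (n+1) ω = i then (1:ℂ) else 0))
        = ∫ ω, Complex.exp (-((a:ℂ) * s) * (W (n+1) ω : ℝ) - η * (T (n+1) ω : ℝ)) *
            (if Y (n+1) ω = i then (1:ℂ) else 0) := by
      intro i
      apply integral_congr_ae
      apply Filter.Eventually.of_forall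
      intro ω
      simp only [hφdef]
      rw [max_eq_left (hTpos (n+1) (by omega) ω)]
    -- assemble
    show r ^ (n+2) * (∫ ω, Complex.exp (-s * (W (n+2) ω : ℝ) - η * (T (n+2) ω : ℝ)) *
        (if Y (n+2) ω = j then (1:ℂ) else 0)) = _
    rw [hEFG, hFsplit, mul_add]
    congr 1
    rw [Finset.mul_sum, Finset.mul_sum]
    apply Finset.sum_congr rfl
    intro i _
    rw [hfi i, hφZ i, hβint i]
    simp only [ZserTerm]
    ring
  -- term 0
  have hSind : MeasurableSet {ω | Y 1 ω = j} := hYmeas 1 (measurableSet_singleton j)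
  have ht0 : ZserTerm W T Y j r s η 0 =
      r * ((volume {ω | Y 1 ω = j}).toReal : ℂ) * Complex.exp (-s * w) := by
    show r ^ (0+1) * (∫ ω, Complex.exp (-s * (W 1 ω : ℝ) - η * (T 1 ω : ℝ)) *
        (if Y 1 ω = j then (1:ℂ) else 0)) = _
    have hcong : (∫ ω, Complex.exp (-s * (W 1 ω : ℝ) - η * (T 1 ω : ℝ)) *
          (if Y 1 ω = j then (1:ℂ) else 0))
        = ∫ ω, Set.indicator {ω' | Y 1 ω' = j} (fun _ => Complex.exp (-s * w)) ω := by
      apply integral_congr_ae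
      filter_upwards [hrec] with ω hω
      rw [hω.1, hω.2.1]
      by_cases hy : Y 1 ω = j
      · simp [Set.indicator_apply, hy]
      · simp [Set.indicator_apply, hy]
    rw [hcong, integral_indicator_const _ hSind, Complex.real_smul, measureReal_def]
    ring
  -- summability facts
  have hZs : Summable (fun n => ZserTerm W T Y j r s η n) := (hZsum s hs j).of_norm
  have hZas : ∀ i, Summable (fun n => ZserTerm W T Y i r ((a:ℂ)*s) η n) :=
    fun i => (hZsum _ has i).of_norm
  have hVs : Summable (fun n => VserTerm W S A T Y a j r s η n) := (hVsum j).of_norm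
  have hsum1 : ∀ i : Fin N, Summable fun n =>
      ZserTerm W T Y i r ((a:ℂ)*s) η n * β i (s + ψ i (η-s)) * χ i j (η-s) :=
    fun i => ((hZas i).mul_right _).mul_right _
  have hsum2 : Summable fun n => r * ∑ i, ZserTerm W T Y i r ((a:ℂ)*s) η n *
      β i (s + ψ i (η-s)) * χ i j (η-s) :=
    (summable_sum (fun i _ => hsum1 i)).mul_left r
  rw [Summable.tsum_eq_zero_add hZs, ht0, tsum_congr key, Summable.tsum_add hsum2 hVs, tsum_mul_left,
    Summable.tsum_finsetSum (fun i _ => hsum1 i)]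
  simp_rw [tsum_mul_right]
  ring
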